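/- Let V be a finite-dimensional real vector space, let Ω ⊆ P(V) and Ω* ⊆ P(V*) be nonempty sets with Ω* compact, such that for every [x] ∈ Ω and [f] ∈ Ω* we have f(x) ≠ 0. Define C(x,y) = sup over [f],[g] ∈ Ω* of (1/2)|log |(f(x)g(y))/(f(y)g(x))||. Then C satisfies the triangle inequality: C(x,y) ≤ C(x,z) + C(z,y) for all x, y, z ∈ Ω. -/

import Mathlib

open scoped LinearAlgebra.Projectivization
open Projectivization
open Topology

/-- The quotient topology on a projectivization. -/
instance projTopology {K V : Type*} [DivisionRing K] [AddCommGroup V] [Module K V]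
    [TopologicalSpace V] : TopologicalSpace (ℙ K V) :=
  inferInstanceAs (TopologicalSpace (Quotient (projectivizationSetoid K V)))

/-- `C(x,y) = sup_{[f],[g] ∈ Ω*} (1/2)|log|f(x)g(y)/(f(y)g(x))||`.  The quantity is
independent of the chosen representatives, so it is computed with `Projectivization.rep`. -/
noncomputable def crossDist {V : Type*} [NormedAddCommGroup V] [NormedSpace ℝ V]
    (Ωd : Set (ℙ ℝ (StrongDual ℝ V))) (x y : ℙ ℝ V) : ℝ :=
  sSup {r : ℝ | ∃ f ∈ Ωd, ∃ g ∈ Ωd,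
    r = (1/2) * |Real.log (abs ((f.rep x.rep * g.rep y.rep) / (f.rep y.rep * g.rep x.rep)))|}

section aux
set_option linter.unusedSectionVars false
variable {V : Type*} [NormedAddCommGroup V] [NormedSpace ℝ V] [FiniteDimensional ℝ V]

local notation "W" => StrongDual ℝ V

noncomputable def projPi : {v : W // v ≠ 0} → ℙ ℝ W :=
  @Quotient.mk' _ (projectivizationSetoid ℝ W)

lemma projPi_eq_mk (v : {v : W // v ≠ 0}) : projPi (V := V) v = Projectivization.mk ℝ v.1 v.2 := rfl

lemma continuous_scale (c : ℝˣ) :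
    Continuous (fun v : {v : W // v ≠ 0} =>
      (⟨(c : ℝ) • v.1, smul_ne_zero c.ne_zero v.2⟩ : {v : W // v ≠ 0})) :=
  ((continuous_const (y := (c : ℝ))).smul continuous_subtype_val).subtype_mk _

lemma isOpenMap_projPi : IsOpenMap (projPi (V := V)) := by
  intro U hU
  have hq : Topology.IsQuotientMap (projPi (V := V)) :=
    @isQuotientMap_quotient_mk' _ _ (projectivizationSetoid ℝ W)
  rw [← hq.isOpen_preimage]
  have : projPi (V := V) ⁻¹' (projPi (V := V) '' U) =
      ⋃ c : ℝˣ, (fun v : {v : W // v ≠ 0} =>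
        (⟨(c : ℝ) • v.1, smul_ne_zero c.ne_zero v.2⟩ : {v : W // v ≠ 0})) ⁻¹' U := by
    ext v
    simp only [Set.mem_preimage, Set.mem_image, Set.mem_iUnion]
    constructor
    · rintro ⟨u, hu, huv⟩
      obtain ⟨a, ha⟩ := (mk_eq_mk_iff ℝ u.1 v.1 u.2 v.2).mp (by
        rw [← projPi_eq_mk, ← projPi_eq_mk]; exact huv)
      exact ⟨a, by
        have h2 : (⟨(a : ℝ) • v.1, smul_ne_zero a.ne_zero v.2⟩ : {v : W // v ≠ 0}) = u :=
          Subtype.ext ha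
        rwa [h2]⟩
    · rintro ⟨c, hc⟩
      refine ⟨_, hc, ?_⟩
      rw [projPi_eq_mk, projPi_eq_mk]
      exact (mk_eq_mk_iff ℝ _ _ _ _).mpr ⟨c, rfl⟩
  rw [this]
  exact isOpen_iUnion fun c => (continuous_scale c).isOpen_preimage U hU

lemma continuousAt_of_comp_projPi {X : Type*} [TopologicalSpace X] (F : ℙ ℝ W → X)
    (v : {v : W // v ≠ 0}) (h : ContinuousAt (F ∘ projPi (V := V)) v) :
    ContinuousAt F (projPi (V := V) v) := by
  have h1 : 𝓝 (projPi (V := V) v) ≤ Filter.map (projPi (V := V)) (𝓝 v) :=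
    isOpenMap_projPi.nhds_le v
  calc Filter.map F (𝓝 (projPi (V := V) v))
      ≤ Filter.map F (Filter.map (projPi (V := V)) (𝓝 v)) := Filter.map_mono h1
    _ = Filter.map (F ∘ projPi (V := V)) (𝓝 v) := (Filter.map_map)
    _ ≤ 𝓝 ((F ∘ projPi (V := V)) v) := h

/-- log of ratio of absolute values; well-defined on projective classes. -/
noncomputable def Dlog (x y : ℙ ℝ V) (p : ℙ ℝ W) : ℝ :=
  Real.log (|p.rep x.rep| / |p.rep y.rep|)

lemma Dlog_projPi (x y : ℙ ℝ V) (v : {v : W // v ≠ 0}) :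
    Dlog x y (projPi (V := V) v) = Real.log (|v.1 x.rep| / |v.1 y.rep|) := by
  set p := projPi (V := V) v with hp
  have hmk : Projectivization.mk ℝ v.1 v.2 = Projectivization.mk ℝ p.rep p.rep_nonzero := by
    rw [mk_rep, hp, projPi_eq_mk]
  obtain ⟨a, ha⟩ := (mk_eq_mk_iff ℝ _ _ _ _).mp hmk
  have hx : v.1 x.rep = (a : ℝ) * p.rep x.rep := by rw [← ha]; rfl
  have hy : v.1 y.rep = (a : ℝ) * p.rep y.rep := by rw [← ha]; rfl
  rw [Dlog, hx, hy, abs_mul, abs_mul,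
    mul_div_mul_left _ _ (abs_ne_zero.mpr a.ne_zero)]

lemma continuousAt_Dlog (x y : ℙ ℝ V) (p : ℙ ℝ W)
    (hx : p.rep x.rep ≠ 0) (hy : p.rep y.rep ≠ 0) :
    ContinuousAt (Dlog x y) p := by
  have hp : projPi (V := V) ⟨p.rep, p.rep_nonzero⟩ = p := by
    rw [projPi_eq_mk]; exact mk_rep p
  rw [← hp]
  apply continuousAt_of_comp_projPi
  have heq : (Dlog x y) ∘ projPi (V := V) =
      fun v : {v : W // v ≠ 0} => Real.log (|v.1 x.rep| / |v.1 y.rep|) :=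
    funext (Dlog_projPi x y)
  rw [heq]
  have cx : Continuous fun v : {v : W // v ≠ 0} => |v.1 x.rep| :=
    ((ContinuousLinearMap.apply ℝ ℝ x.rep).continuous.comp continuous_subtype_val).abs
  have cy : Continuous fun v : {v : W // v ≠ 0} => |v.1 y.rep| :=
    ((ContinuousLinearMap.apply ℝ ℝ y.rep).continuous.comp continuous_subtype_val).abs
  have hratio : ContinuousAt (fun v : {v : W // v ≠ 0} => |v.1 x.rep| / |v.1 y.rep|)
      ⟨p.rep, p.rep_nonzero⟩ :=
    cx.continuousAt.div cy.continuousAt (abs_ne_zero.mpr hy)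
  exact ContinuousAt.log hratio
    (div_ne_zero (abs_ne_zero.mpr hx) (abs_ne_zero.mpr hy))

end aux

section aux2
set_option linter.unusedSectionVars false
variable {V : Type*} [NormedAddCommGroup V] [NormedSpace ℝ V] [FiniteDimensional ℝ V]
local notation "W" => StrongDual ℝ V

lemma abs_sub_le' (u v : ℝ) : |u - v| ≤ |u| + |v| := by
  calc |u - v| = |u + -v| := by ring_nf
    _ ≤ |u| + |-v| := abs_add_le _ _
    _ = |u| + |v| := by rw [abs_neg]

lemma log_cross_eq (x y : ℙ ℝ V) (f g : ℙ ℝ W)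
    (hfx : f.rep x.rep ≠ 0) (hfy : f.rep y.rep ≠ 0)
    (hgx : g.rep x.rep ≠ 0) (hgy : g.rep y.rep ≠ 0) :
    Real.log (abs ((f.rep x.rep * g.rep y.rep) / (f.rep y.rep * g.rep x.rep)))
      = Dlog x y f - Dlog x y g := by
  have ha := abs_ne_zero.mpr hfx
  have hb := abs_ne_zero.mpr hfy
  have hc := abs_ne_zero.mpr hgx
  have hd := abs_ne_zero.mpr hgy
  rw [abs_div, abs_mul, abs_mul, Dlog, Dlog,
    Real.log_div (mul_ne_zero ha hd) (mul_ne_zero hb hc),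
    Real.log_mul ha hd, Real.log_mul hb hc,
    Real.log_div ha hb, Real.log_div hc hd]
  ring

lemma Dlog_cocycle (x y z : ℙ ℝ V) (p : ℙ ℝ W)
    (hx : p.rep x.rep ≠ 0) (hy : p.rep y.rep ≠ 0) (hz : p.rep z.rep ≠ 0) :
    Dlog x y p = Dlog x z p + Dlog z y p := by
  have ha := abs_ne_zero.mpr hx
  have hb := abs_ne_zero.mpr hy
  have hc := abs_ne_zero.mpr hz
  rw [Dlog, Dlog, Dlog, Real.log_div ha hb, Real.log_div ha hc, Real.log_div hc hb]
  ring

end aux2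

/-- Let `V` be a finite-dimensional real vector space, `Ω ⊆ P(V)` and
`Ω* ⊆ P(V*)` nonempty with `Ω*` compact, such that `f(x) ≠ 0` for all `[x] ∈ Ω`,
`[f] ∈ Ω*`.  Then `C` satisfies the triangle inequality on `Ω`. -/
theorem stmt_6 {V : Type*} [NormedAddCommGroup V] [NormedSpace ℝ V]
    [FiniteDimensional ℝ V]
    (Ω : Set (ℙ ℝ V)) (Ωd : Set (ℙ ℝ (StrongDual ℝ V)))
    (hΩne : Ω.Nonempty) (hΩdne : Ωd.Nonempty) (hΩdcpt : IsCompact Ωd)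
    (hpair : ∀ x ∈ Ω, ∀ f ∈ Ωd, Projectivization.rep f (Projectivization.rep x) ≠ 0)
    (x y z : ℙ ℝ V) (hx : x ∈ Ω) (hy : y ∈ Ω) (hz : z ∈ Ω) :
    crossDist Ωd x y ≤ crossDist Ωd x z + crossDist Ωd z y := by
  set S : ℙ ℝ V → ℙ ℝ V → Set ℝ := fun a b => {r : ℝ | ∃ f ∈ Ωd, ∃ g ∈ Ωd,
    r = (1/2) * |Real.log (abs ((f.rep a.rep * g.rep b.rep) / (f.rep b.rep * g.rep a.rep)))|}
      with hS
  have hcd : ∀ a b, crossDist Ωd a b = sSup (S a b) := fun a b => rfl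
  have habs : ∀ a ∈ Ω, ∀ b ∈ Ω, ∀ f ∈ Ωd, ∀ g ∈ Ωd,
      Real.log (abs ((f.rep a.rep * g.rep b.rep) / (f.rep b.rep * g.rep a.rep)))
        = Dlog a b f - Dlog a b g := fun a ha b hb f hf g hg =>
    log_cross_eq a b f g (hpair a ha f hf) (hpair b hb f hf) (hpair a ha g hg) (hpair b hb g hg)
  have hbdd : ∀ a ∈ Ω, ∀ b ∈ Ω, ∃ M, ∀ f ∈ Ωd, |Dlog a b f| ≤ M := by
    intro a ha b hb
    have hcont : ContinuousOn (Dlog a b) Ωd := fun p hp =>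
      (continuousAt_Dlog a b p (hpair a ha p hp) (hpair b hb p hp)).continuousWithinAt
    obtain ⟨M, hM⟩ := hΩdcpt.exists_bound_of_continuousOn hcont
    exact ⟨M, fun f hf => by simpa [Real.norm_eq_abs] using hM f hf⟩
  have hBdd : ∀ a ∈ Ω, ∀ b ∈ Ω, BddAbove (S a b) := by
    intro a ha b hb
    obtain ⟨M, hM⟩ := hbdd a ha b hb
    refine ⟨M, fun r hr => ?_⟩
    obtain ⟨f, hf, g, hg, rfl⟩ := hr
    rw [habs a ha b hb f hf g hg]
    have h1 := hM f hf
    have h2 := hM g hg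
    have h3 := abs_sub_le' (Dlog a b f) (Dlog a b g)
    linarith
  obtain ⟨f0, hf0⟩ := hΩdne
  have h0 : ∀ a ∈ Ω, ∀ b ∈ Ω, 0 ≤ crossDist Ωd a b := by
    intro a ha b hb
    rw [hcd]
    refine le_csSup (hBdd a ha b hb) ⟨f0, hf0, f0, hf0, ?_⟩
    rw [habs a ha b hb f0 hf0 f0 hf0]
    simp
  rw [hcd]
  apply Real.sSup_le
  · rintro r ⟨f, hf, g, hg, rfl⟩
    rw [habs x hx y hy f hf g hg,
      Dlog_cocycle x y z f (hpair x hx f hf) (hpair y hy f hf) (hpair z hz f hf),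
      Dlog_cocycle x y z g (hpair x hx g hg) (hpair y hy g hg) (hpair z hz g hg)]
    have tri : |Dlog x z f + Dlog z y f - (Dlog x z g + Dlog z y g)|
        ≤ |Dlog x z f - Dlog x z g| + |Dlog z y f - Dlog z y g| := by
      have h := abs_add_le (Dlog x z f - Dlog x z g) (Dlog z y f - Dlog z y g)
      calc |Dlog x z f + Dlog z y f - (Dlog x z g + Dlog z y g)|
          = |Dlog x z f - Dlog x z g + (Dlog z y f - Dlog z y g)| := by ring_nf
        _ ≤ _ := h
    have h1 : (1/2) * |Dlog x z f - Dlog x z g| ≤ crossDist Ωd x z := by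
      rw [hcd]
      exact le_csSup (hBdd x hx z hz) ⟨f, hf, g, hg, by rw [habs x hx z hz f hf g hg]⟩
    have h2 : (1/2) * |Dlog z y f - Dlog z y g| ≤ crossDist Ωd z y := by
      rw [hcd]
      exact le_csSup (hBdd z hz y hy) ⟨f, hf, g, hg, by rw [habs z hz y hy f hf g hg]⟩
    linarith
  · exact add_nonneg (h0 x hx z hz) (h0 z hz y hy)
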